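/- Black-boxing is functorial on steady-state relations: with F the open dynamical system (X →ⁱ S ←ᵒ Y, v), F' the open dynamical system (Y →^{i'} S' ←^{o'} Z, v'), and F'F their composite over the pushout S+_Y S' with vector field u = j_* ∘ v ∘ j^* + j'_* ∘ v' ∘ j'^*, the black-boxed relation of F'F equals the relational composite of the black-boxed relations of F' and F: ■(F'F) = ■(F') ∘ ■(F), as subsets of (ℝ^X ⊕ ℝ^X) × (ℝ^Z ⊕ ℝ^Z). -/

import Mathlib

/-- Pushforward of real-valued functions along a map of finite sets (fiberwise sum). -/
def pushR {S S' : Type*} [Fintype S] [DecidableEq S'] (f : S → S') (c : S → ℝ) : S' → ℝ :=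
  fun σ' => ∑ σ : S, if f σ = σ' then c σ else 0

set_option linter.unusedVariables false
open scoped RealInnerProductSpace

lemma pushR_add' {S S' : Type*} [Fintype S] [DecidableEq S'] (f : S → S') (a b : S → ℝ)
    (σ' : S') : pushR f (fun σ => a σ + b σ) σ' = pushR f a σ' + pushR f b σ' := by
  simp only [pushR]
  rw [← Finset.sum_add_distrib]
  exact Finset.sum_congr rfl fun σ _ => by split <;> simp

lemma pushR_smul' {S S' : Type*} [Fintype S] [DecidableEq S'] (f : S → S') (r : ℝ)
    (a : S → ℝ) (σ' : S') : pushR f (fun σ => r * a σ) σ' = r * pushR f a σ' := by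
  simp only [pushR]
  rw [Finset.mul_sum]
  exact Finset.sum_congr rfl fun σ _ => by split <;> simp

lemma pushR_dot {S S' : Type*} [Fintype S] [Fintype S'] [DecidableEq S']
    (f : S → S') (c : S → ℝ) (g : S' → ℝ) :
    ∑ σ', pushR f c σ' * g σ' = ∑ σ, c σ * g (f σ) := by
  simp only [pushR, Finset.sum_mul, ite_mul, zero_mul]
  rw [Finset.sum_comm]
  simp

section Maps

variable {Y S S' P : Type*} [Fintype Y] [Fintype S] [Fintype S'] [Fintype P]
    [DecidableEq S] [DecidableEq S'] [DecidableEq P]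

/-- Boundary map. -/
def Dmap (o : Y → S) (i' : Y → S') :
    EuclideanSpace ℝ Y →ₗ[ℝ] EuclideanSpace ℝ (S ⊕ S') where
  toFun M := WithLp.toLp 2 (Sum.elim (pushR o M) (fun σ' => -(pushR i' M σ')))
  map_add' a b := by
    ext s
    cases s with
    | inl σ =>
      show pushR o (fun y => a y + b y) σ = pushR o a σ + pushR o b σ
      exact pushR_add' o a b σ
    | inr σ' =>
      show -(pushR i' (fun y => a y + b y) σ') = -(pushR i' a σ') + -(pushR i' b σ')
      rw [pushR_add']; ring
  map_smul' r a := by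
    ext s
    cases s with
    | inl σ =>
      show pushR o (fun y => r * a y) σ = r * pushR o a σ
      exact pushR_smul' o r a σ
    | inr σ' =>
      show -(pushR i' (fun y => r * a y) σ') = r * -(pushR i' a σ')
      rw [pushR_smul']; ring

/-- Adjoint of the boundary map. -/
def Dtmap (o : Y → S) (i' : Y → S') :
    EuclideanSpace ℝ (S ⊕ S') →ₗ[ℝ] EuclideanSpace ℝ Y where
  toFun F := WithLp.toLp 2 (fun y => F (Sum.inl (o y)) - F (Sum.inr (i' y)))
  map_add' a b := by
    ext y
    show a (Sum.inl (o y)) + b (Sum.inl (o y)) - (a (Sum.inr (i' y)) + b (Sum.inr (i' y)))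
      = (a (Sum.inl (o y)) - a (Sum.inr (i' y))) + (b (Sum.inl (o y)) - b (Sum.inr (i' y)))
    ring
  map_smul' r a := by
    ext y
    show r * a (Sum.inl (o y)) - r * a (Sum.inr (i' y))
      = r * (a (Sum.inl (o y)) - a (Sum.inr (i' y)))
    ring

/-- Pullback along the quotient map. -/
def Qtmap (j : S → P) (j' : S' → P) :
    EuclideanSpace ℝ P →ₗ[ℝ] EuclideanSpace ℝ (S ⊕ S') where
  toFun g := WithLp.toLp 2 (fun s => g (Sum.elim j j' s))
  map_add' a b := by
    ext s
    show a (Sum.elim j j' s) + b (Sum.elim j j' s) = _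
    rfl
  map_smul' r a := by
    ext s
    show r * a (Sum.elim j j' s) = _
    rfl

lemma adj_D (o : Y → S) (i' : Y → S') (M : EuclideanSpace ℝ Y)
    (F : EuclideanSpace ℝ (S ⊕ S')) :
    ⟪Dmap o i' M, F⟫ = ⟪M, Dtmap o i' F⟫ := by
  simp only [PiLp.inner_apply, RCLike.inner_apply, conj_trivial]
  rw [Fintype.sum_sum_type]
  rw [show (∑ a : S, F (Sum.inl a) * Dmap o i' M (Sum.inl a))
      = ∑ a : S, Dmap o i' M (Sum.inl a) * F (Sum.inl a) from
        Finset.sum_congr rfl fun _ _ => mul_comm _ _,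
    show (∑ a : S', F (Sum.inr a) * Dmap o i' M (Sum.inr a))
      = ∑ a : S', Dmap o i' M (Sum.inr a) * F (Sum.inr a) from
        Finset.sum_congr rfl fun _ _ => mul_comm _ _,
    show (∑ x : Y, Dtmap o i' F x * M x) = ∑ x : Y, M x * Dtmap o i' F x from
        Finset.sum_congr rfl fun _ _ => mul_comm _ _]
  show (∑ σ : S, pushR o M σ * F (Sum.inl σ))
      + (∑ σ' : S', -(pushR i' M σ') * F (Sum.inr σ')) = _
  have e1 : ∑ σ : S, pushR o M σ * F (Sum.inl σ) = ∑ y : Y, M y * F (Sum.inl (o y)) :=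
    pushR_dot o M (fun σ => F (Sum.inl σ))
  have e2 : ∑ σ' : S', pushR i' M σ' * F (Sum.inr σ') = ∑ y : Y, M y * F (Sum.inr (i' y)) :=
    pushR_dot i' M (fun σ' => F (Sum.inr σ'))
  calc (∑ σ : S, pushR o M σ * F (Sum.inl σ))
        + (∑ σ' : S', -(pushR i' M σ') * F (Sum.inr σ'))
      = (∑ σ : S, pushR o M σ * F (Sum.inl σ))
        - (∑ σ' : S', pushR i' M σ' * F (Sum.inr σ')) := by
        rw [sub_eq_add_neg, ← Finset.sum_neg_distrib]
        congr 1
        exact Finset.sum_congr rfl fun σ' _ => by ring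
    _ = ∑ y : Y, M y * (F (Sum.inl (o y)) - F (Sum.inr (i' y))) := by
        rw [e1, e2, ← Finset.sum_sub_distrib]
        exact Finset.sum_congr rfl fun y _ => by ring
    _ = _ := rfl

lemma range_D_eq (o : Y → S) (i' : Y → S') (j : S → P) (j' : S' → P)
    (hcomm : j ∘ o = j' ∘ i')
    (huniv : ∀ {W : Type} (u : S → W) (u' : S' → W), u ∘ o = u' ∘ i' →
      ∃! w : P → W, w ∘ j = u ∧ w ∘ j' = u') :
    (LinearMap.range (Dmap o i'))ᗮ = LinearMap.range (Qtmap j j') := by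
  ext F
  rw [Submodule.mem_orthogonal]
  constructor
  · intro hF
    have hker : Dtmap o i' F = 0 := by
      have h1 : ⟪Dmap o i' (Dtmap o i' F), F⟫ = 0 :=
        hF (Dmap o i' (Dtmap o i' F)) ⟨Dtmap o i' F, rfl⟩
      rw [adj_D] at h1
      exact inner_self_eq_zero.mp h1
    have hagree : (fun σ => F (Sum.inl σ)) ∘ o = (fun σ' => F (Sum.inr σ')) ∘ i' := by
      funext y
      have h2 : F (Sum.inl (o y)) - F (Sum.inr (i' y)) = 0 := congrArg (fun f : EuclideanSpace ℝ Y => f y) hker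
      show F (Sum.inl (o y)) = F (Sum.inr (i' y))
      linarith
    obtain ⟨g, ⟨hg1, hg2⟩, -⟩ := huniv _ _ hagree
    refine ⟨WithLp.toLp 2 g, ?_⟩
    ext s
    cases s with
    | inl σ => exact congrFun hg1 σ
    | inr σ' => exact congrFun hg2 σ'
  · rintro ⟨g, rfl⟩ u ⟨M, rfl⟩
    rw [adj_D]
    have hz : Dtmap o i' (Qtmap j j' g) = 0 := by
      ext y
      show g (j (o y)) - g (j' (i' y)) = 0
      rw [show j (o y) = j' (i' y) from congrFun hcomm y]
      ring
    rw [hz, inner_zero_right]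

end Maps

lemma split_flow {Y S S' P : Type*} [Fintype Y] [Fintype S] [Fintype S'] [Fintype P]
    [DecidableEq S] [DecidableEq S'] [DecidableEq P]
    (o : Y → S) (i' : Y → S') (j : S → P) (j' : S' → P)
    (hcomm : j ∘ o = j' ∘ i')
    (huniv : ∀ {W : Type} (u : S → W) (u' : S' → W), u ∘ o = u' ∘ i' →
      ∃! w : P → W, w ∘ j = u ∧ w ∘ j' = u')
    (w : S → ℝ) (w' : S' → ℝ)
    (h : pushR j w + pushR j' w' = 0) :
    ∃ M : Y → ℝ, pushR o M = w ∧ pushR i' M = -w' := by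
  classical
  set F : EuclideanSpace ℝ (S ⊕ S') :=
    (WithLp.equiv 2 ((S ⊕ S') → ℝ)).symm (Sum.elim w w') with hF
  have hFmem : F ∈ (LinearMap.range (Qtmap j j'))ᗮ := by
    rw [Submodule.mem_orthogonal]
    rintro u ⟨g, rfl⟩
    simp only [PiLp.inner_apply, RCLike.inner_apply, conj_trivial]
    rw [show ∑ s : S ⊕ S', F s * Qtmap j j' g s = ∑ s : S ⊕ S', Qtmap j j' g s * F s from
      Finset.sum_congr rfl fun _ _ => mul_comm _ _]
    show ∑ s : S ⊕ S', Qtmap j j' g s * F s = 0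
    rw [Fintype.sum_sum_type]
    show (∑ σ : S, g (j σ) * w σ) + (∑ σ' : S', g (j' σ') * w' σ') = 0
    have e1 : ∑ σ : S, w σ * g (j σ) = ∑ p : P, pushR j w p * g p := (pushR_dot j w g).symm
    have e2 : ∑ σ' : S', w' σ' * g (j' σ') = ∑ p : P, pushR j' w' p * g p :=
      (pushR_dot j' w' g).symm
    calc (∑ σ : S, g (j σ) * w σ) + (∑ σ' : S', g (j' σ') * w' σ')
        = (∑ σ : S, w σ * g (j σ)) + (∑ σ' : S', w' σ' * g (j' σ')) := by
          congr 1 <;> exact Finset.sum_congr rfl fun _ _ => by ring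
      _ = ∑ p : P, (pushR j w + pushR j' w') p * g p := by
          rw [e1, e2, ← Finset.sum_add_distrib]
          exact Finset.sum_congr rfl fun p _ => by
            show pushR j w p * g p + pushR j' w' p * g p = _
            rw [Pi.add_apply]; ring
      _ = 0 := by rw [h]; simp
  have hFrange : F ∈ LinearMap.range (Dmap o i') := by
    have hDD : LinearMap.range (Dmap o i') = (LinearMap.range (Qtmap j j'))ᗮ := by
      rw [← range_D_eq o i' j j' hcomm huniv, Submodule.orthogonal_orthogonal]
    rw [hDD]
    exact hFmem
  obtain ⟨M, hM⟩ := hFrange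
  refine ⟨M, ?_, ?_⟩
  · funext σ
    exact congrArg (fun f : EuclideanSpace ℝ (S ⊕ S') => f (Sum.inl σ)) hM
  · funext σ'
    have h2 : -(pushR i' M σ') = w' σ' := congrArg (fun f : EuclideanSpace ℝ (S ⊕ S') => f (Sum.inr σ')) hM
    show pushR i' M σ' = -w' σ'
    linarith

lemma pushR_comp {S S' S'' : Type*} [Fintype S] [Fintype S'] [DecidableEq S'] [DecidableEq S'']
    (g : S' → S'') (f : S → S') (c : S → ℝ) :
    pushR (g ∘ f) c = pushR g (pushR f c) := by
  funext τ
  simp only [pushR, Function.comp_apply]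
  rw [show (∑ σ' : S', if g σ' = τ then ∑ σ : S, if f σ = σ' then c σ else 0 else 0)
    = ∑ σ' : S', ∑ σ : S, if f σ = σ' then (if g σ' = τ then c σ else 0) else 0 from
      Finset.sum_congr rfl fun σ' _ => by split <;> simp,
    Finset.sum_comm]
  simp

lemma pushR_add {S S' : Type*} [Fintype S] [DecidableEq S'] (f : S → S') (a b : S → ℝ) :
    pushR f (a + b) = pushR f a + pushR f b := by
  funext σ'
  rw [Pi.add_apply]
  exact pushR_add' f a b σ'

lemma pushR_neg {S S' : Type*} [Fintype S] [DecidableEq S'] (f : S → S') (a : S → ℝ) :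
    pushR f (-a) = -pushR f a := by
  funext σ'
  rw [Pi.neg_apply, show -a = fun σ => (-1 : ℝ) * a σ from funext fun σ => by
    rw [Pi.neg_apply]; ring, pushR_smul']
  ring

lemma pushR_sub {S S' : Type*} [Fintype S] [DecidableEq S'] (f : S → S') (a b : S → ℝ) :
    pushR f (a - b) = pushR f a - pushR f b := by
  rw [sub_eq_add_neg, pushR_add, pushR_neg, sub_eq_add_neg]

/-- A vector field on `ℝ^S` is algebraic if each component is given by a polynomial. -/
def IsAlgebraicVF {S : Type*} [Fintype S] (v : (S → ℝ) → (S → ℝ)) : Prop :=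
  ∃ P : S → MvPolynomial S ℝ, ∀ c σ, v c σ = MvPolynomial.eval c (P σ)

/-- Relational composition. -/
def RelComp {α β γ : Type*} (A : Set (α × β)) (B : Set (β × γ)) : Set (α × γ) :=
  {p | ∃ b, (p.1, b) ∈ A ∧ (b, p.2) ∈ B}

/-- The black-boxed steady-state relation of an open dynamical system `(i, o, v)`:
the set of tuples `((i^*(c), I), (o^*(c), O))` with `v(c) + i_*(I) − o_*(O) = 0`. -/
def blackbox {X Y S : Type*} [Fintype X] [Fintype Y] [Fintype S] [DecidableEq S]
    (i : X → S) (o : Y → S) (v : (S → ℝ) → (S → ℝ)) :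
    Set (((X → ℝ) × (X → ℝ)) × ((Y → ℝ) × (Y → ℝ))) :=
  {p | ∃ c : S → ℝ, p.1.1 = c ∘ i ∧ p.2.1 = c ∘ o ∧
    v c + pushR i p.1.2 - pushR o p.2.2 = 0}

/-- Black-boxing is functorial: the black-boxed relation of the composite open dynamical
system (over the pushout `P = S +_Y S'`, with vector field
`u = j_* ∘ v ∘ j^* + j'_* ∘ v' ∘ j'^*` and legs `j∘i`, `j'∘o'`) equals the relational
composite of the black-boxed relations: `■(F'F) = ■(F') ∘ ■(F)`. -/
theorem blackbox_functorial {X Y Z S S' P : Type*}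
    [Fintype X] [Fintype Y] [Fintype Z] [Fintype S] [Fintype S'] [Fintype P]
    [DecidableEq S] [DecidableEq S'] [DecidableEq P]
    (i : X → S) (o : Y → S) (i' : Y → S') (o' : Z → S')
    (j : S → P) (j' : S' → P)
    (hcomm : j ∘ o = j' ∘ i')
    (huniv : ∀ {W : Type} (u : S → W) (u' : S' → W), u ∘ o = u' ∘ i' →
      ∃! w : P → W, w ∘ j = u ∧ w ∘ j' = u')
    (v : (S → ℝ) → (S → ℝ)) (v' : (S' → ℝ) → (S' → ℝ))
    (hv : IsAlgebraicVF v) (hv' : IsAlgebraicVF v') :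
    blackbox (j ∘ i) (j' ∘ o')
        (fun b => pushR j (v (b ∘ j)) + pushR j' (v' (b ∘ j')))
      = RelComp (blackbox i o v) (blackbox i' o' v') := by
  classical
  ext ⟨⟨x, I⟩, ⟨z, O⟩⟩
  constructor
  · rintro ⟨b, hx, hz, heq⟩
    simp only at hx hz heq
    set c : S → ℝ := b ∘ j with hc
    set c' : S' → ℝ := b ∘ j' with hc'
    have hsplit : pushR j (v c + pushR i I) + pushR j' (v' c' - pushR o' O) = 0 := by
      have : pushR j (v c + pushR i I) + pushR j' (v' c' - pushR o' O)
          = (pushR j (v c) + pushR j' (v' c')) + pushR (j ∘ i) I - pushR (j' ∘ o') O := by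
        rw [pushR_add, pushR_sub, pushR_comp, pushR_comp]
        abel
      rw [this, heq]
    obtain ⟨M, hM1, hM2⟩ := split_flow o i' j j' hcomm huniv _ _ hsplit
    refine ⟨(c ∘ o, M), ⟨c, hx, rfl, ?_⟩, ⟨c', ?_, hz, ?_⟩⟩
    · rw [← hM1]; abel
    · funext y
      exact congrArg b (congrFun hcomm y)
    · rw [hM2]; abel
  · rintro ⟨⟨m, M⟩, ⟨c, hx, hm, hsc⟩, ⟨c', hm', hz, hsc'⟩⟩
    simp only at hx hm hsc hm' hz hsc' ⊢
    have hagree : c ∘ o = c' ∘ i' := by rw [← hm, ← hm']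
    obtain ⟨b, ⟨hb1, hb2⟩, -⟩ := huniv c c' hagree
    refine ⟨b, ?_, ?_, ?_⟩
    · rw [hx, ← hb1]; rfl
    · rw [hz, ← hb2]; rfl
    · show pushR j (v (b ∘ j)) + pushR j' (v' (b ∘ j'))
        + pushR (j ∘ i) I - pushR (j' ∘ o') O = 0
      rw [hb1, hb2]
      have h1 : v c + pushR i I = pushR o M := by
        have := hsc
        rw [sub_eq_zero] at this
        exact this
      have h2 : v' c' - pushR o' O = -(pushR i' M) := by
        have := hsc'
        rw [add_sub_assoc, add_eq_zero_iff_eq_neg] at this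
        rw [eq_neg_iff_add_eq_zero]
        linear_combination (norm := abel) this
      have key : pushR j (v c) + pushR j' (v' c') + pushR (j ∘ i) I - pushR (j' ∘ o') O
          = pushR j (v c + pushR i I) + pushR j' (v' c' - pushR o' O) := by
        rw [pushR_add, pushR_sub, pushR_comp, pushR_comp]
        abel
      calc pushR j (v c) + pushR j' (v' c') + pushR (j ∘ i) I - pushR (j' ∘ o') O
          = pushR j (v c + pushR i I) + pushR j' (v' c' - pushR o' O) := key
        _ = pushR j (pushR o M) + pushR j' (-(pushR i' M)) := by rw [h1, h2]
        _ = pushR (j ∘ o) M - pushR (j' ∘ i') M := by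
            rw [pushR_comp, pushR_comp, pushR_neg]
            abel
        _ = 0 := by rw [hcomm]; abel
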